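/- Let μ be a doubling Borel measure on a metric space M (i.e. there exists C > 0 with μ(B(x,2r)) ≤ C μ(B(x,r)) for all x and r > 0, and μ is nonzero, locally finite). Then every porous subset E of M has μ-measure zero. -/

import Mathlib

open Filter Topology Metric Set MeasureTheory

/-- A set is porous with constant `lam ∈ (0,1)`: each of its points sees nearby
relatively large holes in the set. -/
def IsPorousSet {M : Type*} [MetricSpace M] (E : Set M) : Prop :=
  ∃ lam : ℝ, 0 < lam ∧ lam < 1 ∧ ∀ a ∈ E, ∃ x : ℕ → M, Tendsto x atTop (𝓝 a) ∧
    (∀ n, x n ≠ a) ∧ ∀ n, Metric.ball (x n) (lam * dist a (x n)) ∩ E = ∅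

section Aux

variable {M : Type*} [MetricSpace M] [MeasurableSpace M] [BorelSpace M]
  (μ : Measure M) (C : NNReal)

lemma aux_pow
    (hdoubling : ∀ (x : M) (r : ℝ), 0 < r → μ (Metric.ball x (2 * r)) ≤ (C : ENNReal) * μ (Metric.ball x r)) :
    ∀ (k : ℕ) (x : M) (r : ℝ), 0 < r →
      μ (Metric.ball x (2 ^ k * r)) ≤ (C : ENNReal) ^ k * μ (Metric.ball x r) := by
  intro k
  induction k with
  | zero => intro x r hr; simp
  | succ n ih =>
      intro x r hr
      have h2 : (2:ℝ) ^ (n+1) * r = 2 * (2 ^ n * r) := by ring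
      rw [h2]
      calc μ (Metric.ball x (2 * (2 ^ n * r)))
          ≤ (C : ENNReal) * μ (Metric.ball x (2 ^ n * r)) := hdoubling x _ (by positivity)
        _ ≤ (C : ENNReal) * ((C : ENNReal) ^ n * μ (Metric.ball x r)) :=
            mul_le_mul_right (ih x r hr) _
        _ = (C : ENNReal) ^ (n+1) * μ (Metric.ball x r) := by ring

lemma aux_pos (hμ : μ ≠ 0)
    (hdoubling : ∀ (x : M) (r : ℝ), 0 < r → μ (Metric.ball x (2 * r)) ≤ (C : ENNReal) * μ (Metric.ball x r))
    (x : M) (r : ℝ) (hr : 0 < r) : 0 < μ (Metric.ball x r) := by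
  by_contra h
  push_neg at h
  have h0 : μ (Metric.ball x r) = 0 := le_antisymm h zero_le
  have hk : ∀ k : ℕ, μ (Metric.ball x (2 ^ k * r)) = 0 := fun k =>
    le_antisymm ((aux_pow μ C hdoubling k x r hr).trans (by simp [h0])) zero_le
  have hsub : (univ : Set M) ⊆ ⋃ k : ℕ, Metric.ball x (2 ^ k * r) := by
    intro y _
    obtain ⟨k, hk'⟩ := pow_unbounded_of_one_lt (dist y x / r) (one_lt_two (α := ℝ))
    exact mem_iUnion.2 ⟨k, by rw [mem_ball]; exact (div_lt_iff₀ hr).1 hk'⟩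
  have huniv : μ (univ : Set M) = 0 := by
    refine le_antisymm ?_ zero_le
    calc μ (univ : Set M) ≤ ∑' k : ℕ, μ (Metric.ball x (2 ^ k * r)) :=
          (measure_mono hsub).trans (measure_iUnion_le _)
      _ = 0 := by simp [hk]
  exact hμ (Measure.measure_univ_eq_zero.mp huniv)

lemma aux_lt_top [IsLocallyFiniteMeasure μ]
    (hdoubling : ∀ (x : M) (r : ℝ), 0 < r → μ (Metric.ball x (2 * r)) ≤ (C : ENNReal) * μ (Metric.ball x r))
    (x : M) (r : ℝ) : μ (Metric.ball x r) < ⊤ := by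
  obtain ⟨s, hsmem, hs⟩ := (μ.finiteAt_nhds x)
  obtain ⟨e, he0, hes⟩ := Metric.mem_nhds_iff.1 hsmem
  obtain ⟨k, hk⟩ := pow_unbounded_of_one_lt (r / e) (one_lt_two (α := ℝ))
  have hsub : Metric.ball x r ⊆ Metric.ball x (2 ^ k * e) :=
    ball_subset_ball (le_of_lt ((div_lt_iff₀ he0).1 hk))
  calc μ (Metric.ball x r) ≤ (C : ENNReal) ^ k * μ (Metric.ball x e) :=
        (measure_mono hsub).trans (aux_pow μ C hdoubling k x e he0)
    _ < ⊤ := ENNReal.mul_lt_top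
        (ENNReal.pow_lt_top ENNReal.coe_lt_top) ((measure_mono hes).trans_lt hs)

lemma aux_net [IsLocallyFiniteMeasure μ] (hμ : μ ≠ 0) (hC : 0 < C)
    (hdoubling : ∀ (x : M) (r : ℝ), 0 < r → μ (Metric.ball x (2 * r)) ≤ (C : ENNReal) * μ (Metric.ball x r))
    (x₀ : M) (R ε : ℝ) (hε : 0 < ε) :
    ∃ t : Set M, t.Countable ∧ Metric.ball x₀ R ⊆ ⋃ y ∈ t, Metric.ball y ε := by
  classical
  rcases le_or_gt R 0 with hR | hR
  · exact ⟨∅, countable_empty, by simp [Metric.ball_eq_empty.2 hR]⟩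
  by_contra hcon
  push_neg at hcon
  have H : ∀ t : Finset M, ∃ z, z ∈ Metric.ball x₀ R ∧ ∀ y ∈ t, z ∉ Metric.ball y ε := by
    intro t
    have h1 := hcon (↑t : Set M) t.countable_toSet
    rw [not_subset] at h1
    obtain ⟨z, hz1, hz2⟩ := h1
    exact ⟨z, hz1, fun y hy hmem => hz2 (mem_iUnion₂.2 ⟨y, hy, hmem⟩)⟩
  choose g hg1 hg2 using H
  set v : ℕ → Finset M := fun n => Nat.rec ∅ (fun _ s => insert (g s) s) n with hv
  have hvsucc : ∀ n, v (n+1) = insert (g (v n)) (v n) := fun n => rfl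
  have hvmono : Monotone v := monotone_nat_of_le_succ (fun n => by
    rw [hvsucc]; exact Finset.subset_insert _ _)
  set u : ℕ → M := fun n => g (v n) with hu
  have humem : ∀ n, u n ∈ Metric.ball x₀ R := fun n => hg1 (v n)
  have hsep : ∀ m n, m < n → ε ≤ dist (u n) (u m) := by
    intro m n hmn
    have h1 : u m ∈ v n := hvmono (Nat.succ_le_of_lt hmn)
      (by rw [hvsucc]; exact Finset.mem_insert_self _ _)
    have h2 := hg2 (v n) (u m) h1
    rw [mem_ball] at h2
    exact not_lt.1 h2
  have hdisj : Pairwise (Function.onFun Disjoint fun n => Metric.ball (u n) (ε/2)) := by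
    intro m n hmn
    refine Set.disjoint_left.2 fun z hzm hzn => ?_
    rw [mem_ball] at hzm hzn
    rcases hmn.lt_or_gt with h | h
    · have h1 := hsep m n h
      have h2 : dist (u n) (u m) ≤ dist z (u n) + dist z (u m) := dist_triangle_left _ _ _
      linarith
    · have h1 := hsep n m h
      have h2 : dist (u m) (u n) ≤ dist z (u m) + dist z (u n) := dist_triangle_left _ _ _
      linarith
  have hiu : μ (⋃ n, Metric.ball (u n) (ε/2)) = ∑' n, μ (Metric.ball (u n) (ε/2)) :=
    measure_iUnion hdisj fun n => measurableSet_ball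
  obtain ⟨k, hk⟩ := pow_unbounded_of_one_lt ((2*R) / (ε/2)) (one_lt_two (α := ℝ))
  have h3 : 2 * R < 2 ^ k * (ε/2) := (div_lt_iff₀ (by positivity)).1 hk
  have hlow : ∀ n, μ (Metric.ball x₀ R) ≤ (C : ENNReal) ^ k * μ (Metric.ball (u n) (ε/2)) := by
    intro n
    have hsub : Metric.ball x₀ R ⊆ Metric.ball (u n) (2 ^ k * (ε/2)) := by
      intro z hz
      rw [mem_ball] at hz ⊢
      have h1 : dist z (u n) ≤ dist z x₀ + dist x₀ (u n) := dist_triangle _ _ _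
      have h2 : dist x₀ (u n) < R := by rw [dist_comm]; exact mem_ball.1 (humem n)
      linarith
    exact (measure_mono hsub).trans (aux_pow μ C hdoubling k (u n) (ε/2) (by positivity))
  have hCk0 : ((C : ENNReal) ^ k) ≠ 0 := pow_ne_zero k (by exact_mod_cast hC.ne')
  have hCkt : ((C : ENNReal) ^ k) ≠ ⊤ := ENNReal.pow_ne_top ENNReal.coe_ne_top
  set c : ENNReal := μ (Metric.ball x₀ R) / (C : ENNReal) ^ k with hc
  have hcpos : c ≠ 0 :=
    (ENNReal.div_pos (aux_pos μ C hμ hdoubling x₀ R hR).ne' hCkt).ne'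
  have hcle : ∀ n, c ≤ μ (Metric.ball (u n) (ε/2)) := by
    intro n
    rw [hc, ENNReal.div_le_iff hCk0 hCkt]
    rw [mul_comm]
    exact hlow n
  have htop : (⊤ : ENNReal) ≤ μ (Metric.ball x₀ (R + ε)) := by
    calc (⊤ : ENNReal) = ∑' _ : ℕ, c := (ENNReal.tsum_const_eq_top_of_ne_zero hcpos).symm
      _ ≤ ∑' n, μ (Metric.ball (u n) (ε/2)) := ENNReal.tsum_le_tsum hcle
      _ = μ (⋃ n, Metric.ball (u n) (ε/2)) := hiu.symm
      _ ≤ μ (Metric.ball x₀ (R + ε)) := by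
          refine measure_mono (iUnion_subset fun n z hz => ?_)
          rw [mem_ball] at hz ⊢
          have h1 : dist z x₀ ≤ dist z (u n) + dist (u n) x₀ := dist_triangle _ _ _
          have h2 : dist (u n) x₀ < R := mem_ball.1 (humem n)
          linarith
  exact (aux_lt_top μ C hdoubling x₀ (R + ε)).not_ge htop

lemma aux_secondCountable [IsLocallyFiniteMeasure μ] (hμ : μ ≠ 0) (hC : 0 < C)
    (hdoubling : ∀ (x : M) (r : ℝ), 0 < r → μ (Metric.ball x (2 * r)) ≤ (C : ENNReal) * μ (Metric.ball x r)) :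
    SecondCountableTopology M := by
  have hne : Nonempty M := by
    by_contra h
    rw [not_nonempty_iff] at h
    refine hμ (Measure.measure_univ_eq_zero.mp ?_)
    rw [Set.univ_eq_empty_iff.2 h]
    simp
  obtain ⟨x₀⟩ := hne
  apply EMetric.secondCountable_of_almost_dense_set
  intro ε' hε'
  obtain ⟨e, he0, hee⟩ : ∃ e : ℝ, 0 < e ∧ ENNReal.ofReal e ≤ ε' := by
    rcases eq_or_ne ε' ⊤ with rfl | h
    · exact ⟨1, one_pos, le_top⟩
    · exact ⟨ε'.toReal, ENNReal.toReal_pos hε'.ne' h, by rw [ENNReal.ofReal_toReal h]⟩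
  choose t htc hts using fun n : ℕ => aux_net μ C hμ hC hdoubling x₀ n e he0
  refine ⟨⋃ n, t n, countable_iUnion htc, ?_⟩
  apply eq_univ_of_forall
  intro y
  obtain ⟨n, hn⟩ := exists_nat_gt (dist y x₀)
  have hy : y ∈ Metric.ball x₀ n := mem_ball.2 hn
  obtain ⟨z, hz, hyz⟩ := mem_iUnion₂.1 (hts n hy)
  refine mem_iUnion₂.2 ⟨z, mem_iUnion.2 ⟨n, hz⟩, ?_⟩
  rw [EMetric.mem_closedBall, edist_dist]
  exact le_trans (ENNReal.ofReal_le_ofReal (le_of_lt (mem_ball.1 hyz))) hee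

lemma aux_unifLocDoubling
    (hdoubling : ∀ (x : M) (r : ℝ), 0 < r → μ (Metric.ball x (2 * r)) ≤ (C : ENNReal) * μ (Metric.ball x r)) :
    IsUnifLocDoublingMeasure μ := by
  constructor
  refine ⟨C ^ 2, ?_⟩
  filter_upwards [self_mem_nhdsWithin] with ε (hε : (0:ℝ) < ε)
  intro x
  have h1 : Metric.closedBall x (2 * ε) ⊆ Metric.ball x (2 * (2 * ε)) :=
    closedBall_subset_ball (by linarith)
  have h2 : Metric.ball x ε ⊆ Metric.closedBall x ε := ball_subset_closedBall
  calc μ (Metric.closedBall x (2 * ε)) ≤ μ (Metric.ball x (2 * (2 * ε))) := measure_mono h1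
    _ ≤ (C : ENNReal) * μ (Metric.ball x (2 * ε)) := hdoubling x (2 * ε) (by linarith)
    _ ≤ (C : ENNReal) * ((C : ENNReal) * μ (Metric.ball x ε)) :=
        mul_le_mul_right (hdoubling x ε hε) _
    _ ≤ (C : ENNReal) * ((C : ENNReal) * μ (Metric.closedBall x ε)) :=
        mul_le_mul_right (mul_le_mul_right (measure_mono h2) _) _
    _ = ((C ^ 2 : NNReal) : ENNReal) * μ (Metric.closedBall x ε) := by
        push_cast; ring

end Aux

theorem stmt_3 {M : Type*} [MetricSpace M] [MeasurableSpace M] [BorelSpace M]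
    (μ : Measure M) [IsLocallyFiniteMeasure μ] (hμ : μ ≠ 0)
    (C : NNReal) (hC : 0 < C)
    (hdoubling : ∀ (x : M) (r : ℝ), 0 < r → μ (Metric.ball x (2 * r)) ≤ (C : ENNReal) * μ (Metric.ball x r))
    (E : Set M) (hE : IsPorousSet E) :
    μ E = 0 := by
  haveI := aux_unifLocDoubling μ C hdoubling
  haveI := aux_secondCountable μ C hμ hC hdoubling
  obtain ⟨lam, hl0, hl1, hpor⟩ := hE
  have hae := IsUnifLocDoublingMeasure.ae_tendsto_measure_inter_div μ E (2 / lam)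
  rw [MeasureTheory.ae_iff] at hae
  refine le_antisymm ?_ zero_le
  refine le_trans (le_of_eq ?_) (le_of_eq hae)
  refine (Measure.restrict_apply_superset ?_).symm
  intro a ha
  simp only [mem_setOf_eq]
  intro hP
  obtain ⟨x, htend, hxne, hhole⟩ := hpor a ha
  have hdpos : ∀ n, 0 < dist a (x n) := fun n => dist_pos.2 fun h => hxne n h.symm
  set δf : ℕ → ℝ := fun n => (lam / 2) * dist a (x n) with hδf
  have hδlim : Tendsto δf atTop (𝓝[>] 0) := by
    rw [tendsto_nhdsWithin_iff]
    constructor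
    · have hd : Tendsto (fun n => dist a (x n)) atTop (𝓝 0) := by
        have := tendsto_iff_dist_tendsto_zero.1 htend
        simpa [dist_comm] using this
      have := hd.const_mul (lam / 2)
      simpa using this
    · exact Eventually.of_forall fun n => mul_pos (by linarith) (hdpos n)
  have hmem : ∀ᶠ n in atTop, a ∈ Metric.closedBall (x n) ((2 / lam) * δf n) := by
    refine Eventually.of_forall fun n => ?_
    rw [mem_closedBall]
    have : (2 / lam) * δf n = dist a (x n) := by
      rw [hδf]; field_simp
    rw [this]
  have hT := hP (ι := ℕ) (l := atTop) x δf hδlim hmem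
  have hempty : ∀ n, E ∩ Metric.closedBall (x n) (δf n) = ∅ := by
    intro n
    have hsub : Metric.closedBall (x n) (δf n) ⊆ Metric.ball (x n) (lam * dist a (x n)) := by
      apply closedBall_subset_ball
      rw [hδf]
      have := hdpos n
      nlinarith
    rw [← subset_empty_iff]
    intro z hz
    rw [← hhole n]
    exact ⟨hsub hz.2, hz.1⟩
  have hzero : (fun n => μ (E ∩ Metric.closedBall (x n) (δf n)) / μ (Metric.closedBall (x n) (δf n)))
      = fun _ => (0 : ENNReal) := by
    funext n
    rw [hempty n, measure_empty, ENNReal.zero_div]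
  rw [hzero] at hT
  exact one_ne_zero (tendsto_nhds_unique hT tendsto_const_nhds)
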